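/- Let L be a full lattice in a finite-dimensional real inner product space V and W ⊆ V a subspace. Then W is spanned by W ∩ L if and only if the orthogonal projection P_{W⊥}(L) of L onto the orthogonal complement of W is a discrete subgroup of W⊥. -/

import Mathlib

open Module Submodule

theorem auxA {E : Type*} [NormedAddCommGroup E] [NormedSpace ℝ E]
    [FiniteDimensional ℝ E] (L : Submodule ℤ E) [DiscreteTopology L] :
    finrank ℤ L = finrank ℝ (span ℝ (L : Set E)) := by
  let f := (span ℝ (L : Set E)).subtype
  let L₀ := L.comap (f.restrictScalars ℤ)
  have h_img : f '' L₀ = L := by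
    rw [← LinearMap.coe_restrictScalars ℤ f, ← Submodule.map_coe (f.restrictScalars ℤ),
      Submodule.map_comap_eq_self]
    exact fun x hx ↦ LinearMap.mem_range.mpr ⟨⟨x, Submodule.subset_span hx⟩, rfl⟩
  have h_map : L₀.map (f.restrictScalars ℤ) = L := SetLike.ext'_iff.mpr h_img
  have : DiscreteTopology L₀ := by
    refine DiscreteTopology.preimage_of_continuous_injective (L : Set E) ?_ (injective_subtype _)
    exact LinearMap.continuous_of_finiteDimensional f
  have : IsZLattice ℝ L₀ := ⟨by
    rw [← (Submodule.map_injective_of_injective (injective_subtype _)).eq_iff, Submodule.map_span,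
      Submodule.map_top, range_subtype, h_img]⟩
  have h1 : finrank ℤ L₀ = finrank ℝ (span ℝ (L : Set E)) := ZLattice.rank ℝ L₀
  rw [← h1]
  exact (LinearEquiv.finrank_eq
    ((Submodule.equivMapOfInjective (f.restrictScalars ℤ) (injective_subtype _) L₀).trans
      (LinearEquiv.ofEq _ _ h_map))).symm

theorem auxB {E : Type*} [NormedAddCommGroup E] [NormedSpace ℝ E]
    [FiniteDimensional ℝ E] (L : Submodule ℤ E) [Module.Finite ℤ L]
    (h1 : span ℝ (L : Set E) = ⊤)
    (h2 : finrank ℤ L = finrank ℝ E) : DiscreteTopology L := by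
  classical
  have : Module ℚ E := Module.compHom E (algebraMap ℚ ℝ)
  have : Module.Free ℤ L := by
    have : IsAddTorsionFree E := IsAddTorsionFree.of_module_rat E
    infer_instance
  let b₀ := Module.Free.chooseBasis ℤ L
  let v : Module.Free.ChooseBasisIndex ℤ L → E := fun i => (b₀ i : E)
  have hcard : Fintype.card (Module.Free.ChooseBasisIndex ℤ L) = finrank ℝ E := by
    rw [← h2, finrank_eq_card_chooseBasisIndex]
  have hspanZ : span ℤ (Set.range v) = L := by
    have := congrArg (Submodule.map L.subtype) b₀.span_eq
    rwa [Submodule.map_span, ← Set.range_comp, Submodule.map_top, range_subtype] at this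
  have htop : ⊤ ≤ span ℝ (Set.range v) := by
    rw [← span_span_of_tower (R := ℤ) (S := ℝ), hspanZ, h1]
  let b := basisOfTopLeSpanOfCardEqFinrank v htop hcard
  have hb : L = span ℤ (Set.range ⇑b) := by
    rw [coe_basisOfTopLeSpanOfCardEqFinrank]; exact hspanZ.symm
  rw [hb]
  infer_instance

theorem stmt_3 {V : Type*} [NormedAddCommGroup V] [InnerProductSpace ℝ V]
    [FiniteDimensional ℝ V] (L : AddSubgroup V)
    (hL : ∃ b : Module.Basis (Fin (Module.finrank ℝ V)) ℝ V,
      AddSubgroup.closure (Set.range ⇑b) = L)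
    (W : Submodule ℝ V) :
    Submodule.span ℝ ((W : Set V) ∩ (L : Set V)) = W ↔
      DiscreteTopology
        (AddSubgroup.map (Wᗮ.orthogonalProjectionOnto).toLinearMap.toAddMonoidHom L) := by
  classical
  set p := Wᗮ.orthogonalProjectionOnto with hp
  obtain ⟨b, hb⟩ := hL
  let f : V →ₗ[ℤ] ↥Wᗮ := p.toLinearMap.restrictScalars ℤ
  let ℒ : Submodule ℤ V := AddSubgroup.toIntSubmodule L
  have hℒ : ℒ = span ℤ (Set.range ⇑b) := by
    have h1 := Submodule.span_int_eq_addSubgroupClosure (M := V) (Set.range ⇑b)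
    rw [hb] at h1
    show AddSubgroup.toIntSubmodule L = _
    rw [← h1]
    exact Submodule.toAddSubgroup_toIntSubmodule _
  -- ℒ is discrete
  have hdisc : DiscreteTopology ℒ := by rw [hℒ]; infer_instance
  -- ℒ spans V over ℝ
  have hspanV : span ℝ (ℒ : Set V) = ⊤ := by
    rw [hℒ, span_span_of_tower (R := ℤ) (S := ℝ), b.span_eq]
  have hfinℒ : Module.Finite ℤ ℒ := by
    rw [Module.Finite.iff_fg, hℒ]
    exact Submodule.fg_span (Set.finite_range ⇑b)
  have hrankℒ : finrank ℤ ℒ = finrank ℝ V := by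
    rw [auxA ℒ, hspanV, finrank_top]
  -- the intersection lattice M and the projected lattice Λ
  let N : Submodule ℤ V := Submodule.restrictScalars ℤ W
  let M : Submodule ℤ V := N ⊓ ℒ
  let Λ : Submodule ℤ ↥Wᗮ :=
    AddSubgroup.toIntSubmodule (AddSubgroup.map p.toLinearMap.toAddMonoidHom L)
  have hΛ : Λ = Submodule.map f ℒ := by
    apply SetLike.ext'
    rw [AddSubgroup.coe_toIntSubmodule, AddSubgroup.coe_map, Submodule.map_coe]
    rfl
  have hMset : (M : Set V) = (W : Set V) ∩ (L : Set V) := by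
    simp only [M, N, ℒ, Submodule.coe_inf, Submodule.coe_restrictScalars,
      AddSubgroup.coe_toIntSubmodule]
  have hMdisc : DiscreteTopology M :=
    DiscreteTopology.of_subset hdisc (by rw [hMset]; exact Set.inter_subset_right)
  have hMle : span ℝ (M : Set V) ≤ W := by
    rw [hMset]
    exact Submodule.span_le.mpr Set.inter_subset_left
  -- kernel of the projection
  have hkerf : LinearMap.ker f = N := by
    have hker0 : LinearMap.ker (Wᗮ.orthogonalProjectionOnto : V →ₗ[ℝ] ↥Wᗮ) = Wᗮᗮ :=
      ker_orthogonalProjectionOnto (K := Wᗮ)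
    rw [Submodule.orthogonal_orthogonal] at hker0
    ext x
    simp only [f, N, LinearMap.mem_ker, LinearMap.coe_restrictScalars,
      Submodule.restrictScalars_mem, ← hker0]
    rfl
  -- span of Λ is everything
  have hspanΛ : span ℝ (Λ : Set ↥Wᗮ) = ⊤ := by
    rw [hΛ, Submodule.map_coe]
    have hcoe : ⇑f = ⇑p.toLinearMap := rfl
    rw [hcoe, ← Submodule.map_span, hspanV, Submodule.map_top, LinearMap.range_eq_top.mpr]
    intro y
    exact ⟨y, orthogonalProjectionOnto_mem_subspace_eq_self y⟩
  have hfinΛ : Module.Finite ℤ Λ := by rw [hΛ]; exact Module.Finite.map ℒ f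
  -- rank additivity : finrank Λ + finrank M = finrank ℒ
  have hadd : finrank ℤ Λ + finrank ℤ M = finrank ℤ ℒ := by
    let q : ℒ →ₗ[ℤ] ↥Wᗮ := f.domRestrict ℒ
    have hrange : LinearMap.range q = Λ := by
      rw [LinearMap.range_domRestrict, hΛ]
    have hker : LinearMap.ker q = Submodule.comap ℒ.subtype M := by
      ext x
      simp only [q, LinearMap.mem_ker, LinearMap.domRestrict_apply, Submodule.mem_comap,
        Submodule.coe_subtype, Submodule.mem_inf, M]
      constructor
      · intro hx
        exact ⟨by rw [← hkerf]; exact hx, x.2⟩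
      · intro hx
        have := hx.1
        rw [← hkerf] at this
        exact this
    have hM' : Module.Finite ℤ M := by
      have hno : IsNoetherian ℤ ℒ := isNoetherian_of_isNoetherianRing_of_finite ℤ ℒ
      have hfg : (Submodule.comap ℒ.subtype M).FG := IsNoetherian.noetherian _
      have : Module.Finite ℤ (Submodule.comap ℒ.subtype M) := Module.Finite.iff_fg.mpr hfg
      exact Module.Finite.equiv (Submodule.comapSubtypeEquivOfLe inf_le_right)
    have hrn := LinearMap.rank_range_add_rank_ker q
    rw [hrange, hker] at hrn
    have hkereq : Module.rank ℤ (Submodule.comap ℒ.subtype M) = Module.rank ℤ M :=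
      LinearEquiv.rank_eq (Submodule.comapSubtypeEquivOfLe inf_le_right)
    rw [hkereq] at hrn
    have h1 : Module.rank ℤ Λ < Cardinal.aleph0 := Module.rank_lt_aleph0 ℤ Λ
    have h2 : Module.rank ℤ M < Cardinal.aleph0 := Module.rank_lt_aleph0 ℤ M
    have := congrArg Cardinal.toNat hrn
    rwa [Cardinal.toNat_add h1 h2] at this
  have horth : finrank ℝ W + finrank ℝ ↥Wᗮ = finrank ℝ V :=
    Submodule.finrank_add_finrank_orthogonal W
  have hdisceq : DiscreteTopology Λ ↔
      DiscreteTopology (AddSubgroup.map p.toLinearMap.toAddMonoidHom L) := Iff.rfl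
  constructor
  · -- forward
    intro h
    rw [← hdisceq]
    have hrankM : finrank ℤ M = finrank ℝ W := by
      rw [auxA M, hMset, h]
    have hrankΛ : finrank ℤ Λ = finrank ℝ ↥Wᗮ := by omega
    exact auxB Λ hspanΛ hrankΛ
  · -- backward
    intro h
    rw [← hdisceq] at h
    have hrankΛ : finrank ℤ Λ = finrank ℝ ↥Wᗮ := by
      rw [auxA Λ, hspanΛ, finrank_top]
    have hrankM : finrank ℤ M = finrank ℝ W := by omega
    have hspanM : span ℝ (M : Set V) = W := by
      apply Submodule.eq_of_le_of_finrank_le hMle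
      rw [← hrankM, auxA M]
    rw [← hMset]
    exact hspanM
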